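/- The language {aⁿbⁿcⁿ : n ≥ 0} over Σ = {a,b,c} is recognizable by a C-RASP program without positional relations: a word w is in the language iff (i) every a in w is preceded only by a's, (ii) every b is preceded only by a's and b's, and (iii) the total counts of a, b, c in w are equal. Formally, conditions (i) and (ii) are expressed via counting positions violating the prefix conditions, and condition (iii) via comparisons of counts. -/

import Mathlib

mutual
/-- Syntax of C-RASP programs without positional relations: Boolean-valued
operations. A program (a sequence of operations, each possibly referring to
earlier ones) is represented by the expression tree of its final
Boolean-valued operation. -/
inductive BExpr (α : Type) : Type
  | tok : α → BExpr α                      -- initial operation `Q_σ(i)`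
  | not : BExpr α → BExpr α                -- Boolean negation
  | and : BExpr α → BExpr α → BExpr α      -- Boolean conjunction
  | top : BExpr α                          -- constant ⊤
  | le  : CExpr α → CExpr α → BExpr α      -- comparison `C₁(i) ≤ C₂(i)`
/-- Count-valued C-RASP operations. -/
inductive CExpr (α : Type) : Type
  | count : BExpr α → CExpr α              -- `#{j ≤ i : P(j)}`
  | cond  : BExpr α → CExpr α → CExpr α → CExpr α  -- conditional
  | add : CExpr α → CExpr α → CExpr α      -- addition
  | sub : CExpr α → CExpr α → CExpr α      -- subtraction
  | one : CExpr α                          -- constant 1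
end

mutual
/-- Evaluation of a Boolean-valued C-RASP operation on word `w` at
(0-based) position `i`. -/
def BExpr.eval {α : Type} [DecidableEq α] (w : List α) : BExpr α → ℕ → Bool
  | .tok σ, i => decide (w[i]? = some σ)
  | .not b, i => ! b.eval w i
  | .and b₁ b₂, i => b₁.eval w i && b₂.eval w i
  | .top, _ => true
  | .le c₁ c₂, i => decide (c₁.eval w i ≤ c₂.eval w i)
/-- Evaluation of a count-valued C-RASP operation on word `w` at position `i`. -/
def CExpr.eval {α : Type} [DecidableEq α] (w : List α) : CExpr α → ℕ → ℤ
  | .count b, i => ((List.range (i + 1)).countP (fun j => b.eval w j) : ℤ)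
  | .cond b c₁ c₂, i => if b.eval w i then c₁.eval w i else c₂.eval w i
  | .add c₁ c₂, i => c₁.eval w i + c₂.eval w i
  | .sub c₁ c₂, i => c₁.eval w i - c₂.eval w i
  | .one, _ => 1
end

/-- A C-RASP program accepts a word iff its final Boolean-valued operation is
true at the last position of the word. -/
def BExpr.accepts {α : Type} [DecidableEq α] (P : BExpr α) (w : List α) : Prop :=
  P.eval w (w.length - 1) = true

/-- The three-letter alphabet `{a, b, c}`. -/
inductive ABC : Type
  | a | b | c
deriving DecidableEq
set_option maxRecDepth 10000
namespace Stmt17Aux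
open List

def or' (b₁ b₂ : BExpr ABC) : BExpr ABC := .not ((b₁.not).and (b₂.not))
def eq' (c₁ c₂ : CExpr ABC) : BExpr ABC := (BExpr.le c₁ c₂).and (BExpr.le c₂ c₁)
def cntTok (σ : ABC) : CExpr ABC := .count (.tok σ)
def bad1 : BExpr ABC := (BExpr.tok .a).and (.le .one (.count (or' (.tok .b) (.tok .c))))
def bad2 : BExpr ABC := (BExpr.tok .b).and (.le .one (.count (.tok .c)))
def prog : BExpr ABC :=
  ((eq' (cntTok .a) (cntTok .b)).and (eq' (cntTok .b) (cntTok .c))).and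
    (.le (.count (or' bad1 bad2)) (.sub .one .one))

def cnt (w : List ABC) (σ : ABC) (n : ℕ) : ℕ :=
  (List.range n).countP (fun j => decide (w[j]? = some σ))

lemma eval_prog (w : List ABC) (i : ℕ) :
    prog.eval w i = true ↔
      (cnt w .a (i+1) ≤ cnt w .b (i+1) ∧ cnt w .b (i+1) ≤ cnt w .a (i+1)) ∧
      (cnt w .b (i+1) ≤ cnt w .c (i+1) ∧ cnt w .c (i+1) ≤ cnt w .b (i+1)) ∧
      (∀ j ≤ i,
        ¬(w[j]? = some ABC.a ∧ ∃ k ≤ j, w[k]? = some ABC.b ∨ w[k]? = some ABC.c) ∧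
        ¬(w[j]? = some ABC.b ∧ ∃ k ≤ j, w[k]? = some ABC.c)) := by
  simp only [prog, eq', cntTok, or', bad1, bad2, BExpr.eval, CExpr.eval, cnt]
  simp only [Bool.and_eq_true, decide_eq_true_eq, Nat.cast_le, Nat.one_le_cast]
  norm_num [List.countP_eq_zero, List.mem_range, Nat.lt_succ_iff, List.countP_pos_iff]
  tauto

lemma cnt_eq (w : List ABC) (σ : ABC) : cnt w σ w.length = w.count σ := by
  unfold cnt
  induction w with
  | nil => simp
  | cons x t ih =>
    rw [List.length_cons, List.range_succ_eq_map, List.countP_cons, List.countP_map]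
    simp only [Function.comp_def, List.getElem?_cons_succ, List.getElem?_cons_zero,
      Option.some_inj, List.count_cons, ih]
    by_cases h : x = σ
    · simp [h]
    · simp [h, Ne.symm h]

def rank : ABC → ℕ
  | .a => 0 | .b => 1 | .c => 2

lemma sorted_decomp (w : List ABC)
    (hw : w.Pairwise (fun x y => rank x ≤ rank y)) :
    w = List.replicate (w.count .a) .a ++ List.replicate (w.count .b) .b ++
        List.replicate (w.count .c) .c := by
  induction w with
  | nil => simp
  | cons x t ih =>
    rw [List.pairwise_cons] at hw
    obtain ⟨hx, ht⟩ := hw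
    have ht' := ih ht
    cases x with
    | a =>
      simp only [List.count_cons]
      norm_num
      rw [List.replicate_succ]
      simpa using congrArg (List.cons ABC.a) ht'
    | b =>
      have ha : t.count .a = 0 := by
        rw [List.count_eq_zero]
        intro h; have := hx _ h; simp [rank] at this
      have ht2 : t = List.replicate (t.count .b) .b ++ List.replicate (t.count .c) .c := by
        rw [ha] at ht'; simpa using ht'
      simp only [List.count_cons, ha]
      norm_num
      conv_lhs => rw [ht2]
      rw [List.replicate_succ]
      simp
    | c =>
      have ha : t.count .a = 0 := by
        rw [List.count_eq_zero]
        intro h; have := hx _ h; simp [rank] at this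
      have hb : t.count .b = 0 := by
        rw [List.count_eq_zero]
        intro h; have := hx _ h; simp [rank] at this
      have ht2 : t = List.replicate (t.count .c) .c := by
        rw [ha, hb] at ht'; simpa using ht'
      simp only [List.count_cons, ha, hb]
      norm_num
      conv_lhs => rw [ht2]
      rw [List.replicate_succ]
      simp

lemma pairwise_replicate' (n : ℕ) (x : ABC) :
    (List.replicate n x).Pairwise (fun a b => rank a ≤ rank b) := by
  induction n with
  | zero => simp
  | succ m ih =>
    rw [List.replicate_succ, List.pairwise_cons]
    exact ⟨fun y hy => by rw [List.eq_of_mem_replicate hy], ih⟩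

lemma pattern_pairwise (n : ℕ) :
    (List.replicate n ABC.a ++ List.replicate n ABC.b ++ List.replicate n ABC.c).Pairwise
      (fun x y => rank x ≤ rank y) := by
  simp only [List.pairwise_append, List.mem_append, List.mem_replicate]
  refine ⟨⟨pairwise_replicate' n _, pairwise_replicate' n _, ?_⟩, pairwise_replicate' n _, ?_⟩
  · rintro x ⟨-, rfl⟩ y ⟨-, rfl⟩; simp [rank]
  · rintro x (⟨-, rfl⟩ | ⟨-, rfl⟩) y ⟨-, rfl⟩ <;> simp [rank]

lemma get?_some_lt {w : List ABC} {j : ℕ} {x : ABC} (h : w[j]? = some x) :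
    j < w.length := by
  by_contra hc
  rw [List.getElem?_eq_none (le_of_not_gt hc)] at h
  exact Option.some_ne_none x h.symm

lemma get?_getElem {w : List ABC} {j : ℕ} (h : j < w.length) : w[j]? = some w[j] := by
  rw [List.getElem?_eq_getElem h]

lemma badfree_of_pairwise (w : List ABC)
    (hp : w.Pairwise (fun x y => rank x ≤ rank y)) (j : ℕ) :
    ¬(w[j]? = some ABC.a ∧ ∃ k ≤ j, w[k]? = some ABC.b ∨ w[k]? = some ABC.c) ∧
    ¬(w[j]? = some ABC.b ∧ ∃ k ≤ j, w[k]? = some ABC.c) := by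
  rw [List.pairwise_iff_getElem] at hp
  constructor
  · rintro ⟨hj, k, hkj, hk⟩
    have hjl : j < w.length := get?_some_lt hj
    have hkl : k < w.length := hk.elim (fun h => get?_some_lt h) (fun h => get?_some_lt h)
    have hkx : w[k]? = some w[k] := get?_getElem hkl
    have hjx : w[j]? = some w[j] := get?_getElem hjl
    rw [hjx, Option.some_inj] at hj
    have hne : k ≠ j := by
      rintro rfl
      rcases hk with hk | hk <;> rw [hkx, Option.some_inj, hj] at hk <;> exact ABC.noConfusion hk
    have hr := hp k j hkl hjl (lt_of_le_of_ne hkj hne)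
    rcases hk with hk | hk <;> rw [hkx, Option.some_inj] at hk <;>
      rw [hk, hj] at hr <;> simp [rank] at hr
  · rintro ⟨hj, k, hkj, hk⟩
    have hjl : j < w.length := get?_some_lt hj
    have hkl : k < w.length := get?_some_lt hk
    have hkx : w[k]? = some w[k] := get?_getElem hkl
    have hjx : w[j]? = some w[j] := get?_getElem hjl
    rw [hjx, Option.some_inj] at hj
    rw [hkx, Option.some_inj] at hk
    have hne : k ≠ j := by rintro rfl; rw [hj] at hk; exact ABC.noConfusion hk
    have hr := hp k j hkl hjl (lt_of_le_of_ne hkj hne)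
    rw [hk, hj] at hr
    simp [rank] at hr

end Stmt17Aux

open Stmt17Aux in
/-- The language `{aⁿbⁿcⁿ : n ≥ 0}` is recognizable by a C-RASP program
without positional relations. -/
theorem stmt17 :
    ∃ P : BExpr ABC, ∀ w : List ABC,
      P.accepts w ↔
        ∃ n : ℕ, w = List.replicate n ABC.a ++ List.replicate n ABC.b ++
          List.replicate n ABC.c := by
  refine ⟨prog, fun w => ?_⟩
  unfold BExpr.accepts
  rcases eq_or_ne w [] with rfl | hw
  · simp only [List.length_nil, Nat.zero_sub, eval_prog]
    constructor
    · intro _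
      exact ⟨0, by simp⟩
    · intro _
      refine ⟨⟨le_refl _, le_refl _⟩, ⟨le_refl _, le_refl _⟩, ?_⟩
      intro j _
      simp
  · have hL : 0 < w.length := List.length_pos_iff.mpr hw
    have hsucc : w.length - 1 + 1 = w.length := Nat.succ_pred_eq_of_pos hL
    rw [eval_prog, hsucc, cnt_eq, cnt_eq, cnt_eq]
    constructor
    · rintro ⟨⟨h1, h2⟩, ⟨h3, h4⟩, hbad⟩
      have hab : w.count .a = w.count .b := le_antisymm h1 h2
      have hbc : w.count .b = w.count .c := le_antisymm h3 h4
      have hp : w.Pairwise (fun x y => rank x ≤ rank y) := by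
        rw [List.pairwise_iff_getElem]
        intro i j hi hj hij
        have hj' : j ≤ w.length - 1 := by omega
        obtain ⟨hb1, hb2⟩ := hbad j hj'
        have hgi : w[i]? = some w[i] := get?_getElem hi
        have hgj : w[j]? = some w[j] := get?_getElem hj
        by_contra hcon
        push_neg at hcon
        cases h1 : w[i] <;> cases h2 : w[j] <;> rw [h1, h2] at hcon <;>
          simp [rank] at hcon
        · exact hb1 ⟨by rw [hgj, h2], i, hij.le, Or.inl (by rw [hgi, h1])⟩
        · exact hb1 ⟨by rw [hgj, h2], i, hij.le, Or.inr (by rw [hgi, h1])⟩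
        · exact hb2 ⟨by rw [hgj, h2], i, hij.le, by rw [hgi, h1]⟩
      have hd := sorted_decomp w hp
      refine ⟨w.count .a, ?_⟩
      conv_lhs => rw [hd]
      rw [← hab, ← hab.trans hbc]
    · rintro ⟨n, rfl⟩
      have hca : (List.replicate n ABC.a ++ List.replicate n ABC.b ++
          List.replicate n ABC.c).count ABC.a = n := by
        simp [List.count_append, List.count_replicate]
      have hcb : (List.replicate n ABC.a ++ List.replicate n ABC.b ++
          List.replicate n ABC.c).count ABC.b = n := by
        simp [List.count_append, List.count_replicate]
      have hcc : (List.replicate n ABC.a ++ List.replicate n ABC.b ++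
          List.replicate n ABC.c).count ABC.c = n := by
        simp [List.count_append, List.count_replicate]
      rw [hca, hcb, hcc]
      exact ⟨⟨le_refl _, le_refl _⟩, ⟨le_refl _, le_refl _⟩,
        fun j _ => badfree_of_pairwise _ (pattern_pairwise n) j⟩
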